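/- arXiv:1206.1166 — 3 statements merged into one kernel-verified Lean document; each statement's English description precedes it below -/
import Mathlib

section
/- For complex s with Re(s) > 1, ∑_{n=1}^∞ d(n)²/n^s = ζ(s)⁴/ζ(2s). -/
open ArithmeticFunction Finset Complex LSeries.notation
open scoped ArithmeticFunction.Moebius ArithmeticFunction.zeta

namespace DivSqAux

/-- The arithmetic function which is `μ (√n)` on squares and `0` elsewhere. -/
noncomputable def F : ArithmeticFunction ℂ :=
  ⟨fun n => if IsSquare n then ((μ n.sqrt : ℤ) : ℂ) else 0, by simp⟩

lemma F_apply (n : ℕ) : F n = if IsSquare n then ((μ n.sqrt : ℤ) : ℂ) else 0 := rfl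

lemma isSquare_left_of_coprime {m n : ℕ} (h : Nat.Coprime m n) (hsq : IsSquare (m * n)) :
    IsSquare m := by
  obtain ⟨c, hc⟩ := hsq
  obtain ⟨d, hd⟩ := exists_eq_pow_of_mul_eq_pow (α := ℕ)
    (by rw [gcd_eq_nat_gcd, Nat.Coprime.gcd_eq_one h]; exact isUnit_one)
    (c := c) (k := 2) (by rw [hc, sq])
  exact ⟨d, by rw [hd, sq]⟩

lemma F_mult : F.IsMultiplicative := by
  constructor
  · simp [F_apply]
  · intro m n h
    by_cases hmn : IsSquare (m * n)
    · have hm := isSquare_left_of_coprime h hmn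
      have hn := isSquare_left_of_coprime h.symm (mul_comm m n ▸ hmn)
      obtain ⟨a, rfl⟩ := hm
      obtain ⟨b, rfl⟩ := hn
      have hab : Nat.Coprime a b :=
        Nat.Coprime.coprime_dvd_left (dvd_mul_left a a)
          (Nat.Coprime.coprime_dvd_right (dvd_mul_left b b) h)
      have ha : IsSquare (a * a) := ⟨a, rfl⟩
      have hb : IsSquare (b * b) := ⟨b, rfl⟩
      rw [F_apply, F_apply, F_apply, if_pos hmn, if_pos ha, if_pos hb,
        show a * a * (b * b) = (a * b) * (a * b) by ring, Nat.sqrt_eq, Nat.sqrt_eq,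
        Nat.sqrt_eq, isMultiplicative_moebius.map_mul_of_coprime hab]
      push_cast
      ring
    · rw [F_apply, if_neg hmn]
      by_cases hm : IsSquare m
      · have hn : ¬ IsSquare n := fun hn => hmn (hm.mul hn)
        simp [F_apply, if_neg hn]
      · simp [F_apply, if_neg hm]

lemma F_pow_even {p k : ℕ} : F (p ^ (2 * k)) = ((μ (p ^ k) : ℤ) : ℂ) := by
  have h1 : p ^ (2 * k) = (p ^ k) * (p ^ k) := by rw [two_mul, pow_add]
  rw [F_apply, if_pos ⟨p ^ k, h1⟩, h1, Nat.sqrt_eq]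

lemma F_pow_eq_zero {p j : ℕ} (hp : p.Prime) (h0 : j ≠ 0) (h2 : j ≠ 2) : F (p ^ j) = 0 := by
  rcases Nat.even_or_odd j with ⟨m, hm⟩ | hj
  · have : j = 2 * m := by omega
    subst this
    rw [F_pow_even, moebius_apply_prime_pow hp (by omega), if_neg (by omega)]
    simp
  · rw [F_apply, if_neg]
    rintro ⟨c, hc⟩
    have hcd : c ∣ p ^ j := hc ▸ dvd_mul_left c c
    obtain ⟨i, hi, rfl⟩ := (Nat.dvd_prime_pow hp).mp hcd
    rw [← pow_add] at hc
    have := Nat.pow_right_injective hp.two_le hc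
    exact (Nat.not_even_iff_odd.mpr hj) ⟨i, by omega⟩

noncomputable def Z : ArithmeticFunction ℂ := ((ζ : ArithmeticFunction ℕ) : ArithmeticFunction ℂ)

noncomputable def M : ArithmeticFunction ℂ :=
  (((μ : ArithmeticFunction ℤ) : ArithmeticFunction ℂ)).pmul
    (((μ : ArithmeticFunction ℤ) : ArithmeticFunction ℂ))

noncomputable def D : ArithmeticFunction ℂ := Z * Z

lemma Z_mult : Z.IsMultiplicative := isMultiplicative_zeta.natCast

lemma M_mult : M.IsMultiplicative := isMultiplicative_moebius.intCast.pmul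
  isMultiplicative_moebius.intCast

lemma Z_apply_ne {n : ℕ} (hn : n ≠ 0) : Z n = 1 := by
  simp [Z, zeta_apply_ne hn]

lemma D_apply {n : ℕ} (hn : n ≠ 0) : D n = ((n.divisors.card : ℕ) : ℂ) := by
  rw [D, Z, coe_zeta_mul_apply]
  rw [Finset.card_eq_sum_ones n.divisors]
  push_cast
  refine Finset.sum_congr rfl fun i hi => ?_
  simp [zeta_apply_ne (Nat.pos_of_mem_divisors hi).ne']

lemma D_pp {p k : ℕ} (hp : p.Prime) : D (p ^ k) = ((k : ℂ) + 1) := by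
  rw [D_apply (pow_ne_zero k hp.pos.ne'), Nat.divisors_prime_pow hp]
  simp

lemma M_pp {p k : ℕ} (hp : p.Prime) :
    M (p ^ k) = if k = 0 then 1 else if k = 1 then 1 else 0 := by
  rcases eq_or_ne k 0 with rfl | h0
  · simpa using M_mult.map_one
  rw [M, pmul_apply, intCoe_apply, moebius_apply_prime_pow hp h0]
  rcases eq_or_ne k 1 with rfl | h1
  · simp
  · simp [h0, h1]

lemma FZ_pp {p k : ℕ} (hp : p.Prime) :
    (F * Z) (p ^ k) = if k = 0 then 1 else if k = 1 then 1 else 0 := by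
  rw [Z, coe_mul_zeta_apply (f := F), Nat.sum_divisors_prime_pow hp]
  have hF1 : F 1 = 1 := F_mult.map_one
  have hFp2 : F (p ^ 2) = -1 := by
    have := F_pow_even (p := p) (k := 1)
    rw [pow_one] at this
    rw [show 2 * 1 = 2 from rfl] at this
    rw [this, moebius_apply_prime hp]
    simp
  rcases eq_or_ne k 0 with rfl | h0
  · simpa using hF1
  rcases eq_or_ne k 1 with rfl | h1
  · rw [Finset.sum_range_succ, Finset.sum_range_one, pow_zero, hF1,
      F_pow_eq_zero hp (by omega) (by omega)]
    simp
  -- k ≥ 2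
  have h2k : 2 ≤ k := by omega
  rw [if_neg h0, if_neg h1]
  have : ∀ j ∈ Finset.range (k + 1), F (p ^ j) =
      (if j = 0 then (1 : ℂ) else 0) + (if j = 2 then (-1 : ℂ) else 0) := by
    intro j _
    rcases eq_or_ne j 0 with rfl | hj0
    · simpa using hF1
    rcases eq_or_ne j 2 with rfl | hj2
    · simp [hFp2, hj0]
    · rw [F_pow_eq_zero hp hj0 hj2, if_neg hj0, if_neg hj2]; ring
  rw [Finset.sum_congr rfl this, Finset.sum_add_distrib,
    Finset.sum_ite_eq' (Finset.range (k + 1)) 0 (fun _ => (1 : ℂ)),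
    Finset.sum_ite_eq' (Finset.range (k + 1)) 2 (fun _ => (-1 : ℂ)),
    if_pos (Finset.mem_range.mpr (by omega)), if_pos (Finset.mem_range.mpr (by omega))]
  ring

lemma M_eq_F_mul_Z : M = F * Z := by
  rw [IsMultiplicative.eq_iff_eq_on_prime_powers _ M_mult _ (F_mult.mul Z_mult)]
  intro p i hp
  rw [M_pp hp, FZ_pp hp]

lemma MZ_pp {p k : ℕ} (hp : p.Prime) :
    (M * Z) (p ^ k) = if k = 0 then 1 else 2 := by
  rw [Z, coe_mul_zeta_apply (f := M), Nat.sum_divisors_prime_pow hp]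
  rcases eq_or_ne k 0 with rfl | h0
  · simpa using M_mult.map_one
  rw [if_neg h0]
  have : ∀ j ∈ Finset.range (k + 1), M (p ^ j) =
      (if j = 0 then (1 : ℂ) else 0) + (if j = 1 then (1 : ℂ) else 0) := by
    intro j _
    rw [M_pp hp]
    rcases eq_or_ne j 0 with rfl | hj0
    · simp
    rcases eq_or_ne j 1 with rfl | hj1
    · simp
    · simp [hj0, hj1]
  rw [Finset.sum_congr rfl this, Finset.sum_add_distrib,
    Finset.sum_ite_eq' (Finset.range (k + 1)) 0 (fun _ => (1 : ℂ)),
    Finset.sum_ite_eq' (Finset.range (k + 1)) 1 (fun _ => (1 : ℂ)),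
    if_pos (Finset.mem_range.mpr (by omega)), if_pos (Finset.mem_range.mpr (by omega))]
  ring

lemma D_mult : D.IsMultiplicative := by unfold D; exact Z_mult.mul Z_mult

lemma A1 : D.pmul D = (M * Z) * D := by
  rw [IsMultiplicative.eq_iff_eq_on_prime_powers _ (D_mult.pmul D_mult) _
    ((M_mult.mul Z_mult).mul D_mult)]
  intro p k hp
  rw [pmul_apply, D_pp hp, mul_apply,
    Nat.sum_divisorsAntidiagonal (fun a b => (M * Z) a * D b),
    Nat.sum_divisors_prime_pow hp]
  have hstep : ∀ j ∈ Finset.range (k + 1),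
      (M * Z) (p ^ j) * D (p ^ k / p ^ j) =
        (if j = 0 then (1 : ℂ) else 2) * (((k - j : ℕ) : ℂ) + 1) := by
    intro j hj
    have hjk : j ≤ k := by
      have := Finset.mem_range.mp hj; omega
    rw [Nat.pow_div hjk hp.pos, MZ_pp hp, D_pp hp]
  rw [Finset.sum_congr rfl hstep, Finset.sum_range_succ']
  have h2 : ∑ i ∈ Finset.range k,
      (if i + 1 = 0 then (1 : ℂ) else 2) * (((k - (i + 1) : ℕ) : ℂ) + 1) =
      2 * ((∑ i ∈ Finset.range k, (k - i) : ℕ) : ℂ) := by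
    rw [Nat.cast_sum, Finset.mul_sum]
    refine Finset.sum_congr rfl fun i hi => ?_
    have hik : i < k := Finset.mem_range.mp hi
    have he : k - (i + 1) + 1 = k - i := by omega
    rw [if_neg (Nat.succ_ne_zero i), ← he]
    push_cast
    ring
  have h4 : ∑ i ∈ Finset.range k, (k - i) = (∑ i ∈ Finset.range k, i) + k :=
    calc ∑ i ∈ Finset.range k, (k - i)
        = ∑ i ∈ Finset.range k, (k - 1 - i + 1) := by
          refine Finset.sum_congr rfl fun i hi => ?_
          have := Finset.mem_range.mp hi; omega
      _ = ∑ i ∈ Finset.range k, (i + 1) := Finset.sum_range_reflect (fun j => j + 1) k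
      _ = (∑ i ∈ Finset.range k, i) + k := by rw [Finset.sum_add_distrib]; simp
  have h3 : 2 * (∑ i ∈ Finset.range k, (k - i)) = k * (k + 1) := by
    have hg := Finset.sum_range_id_mul_two k
    cases k with
    | zero => simp
    | succ n =>
      rw [Nat.succ_sub_one] at hg
      rw [h4]
      calc 2 * ((∑ i ∈ Finset.range (n + 1), i) + (n + 1))
          = (∑ i ∈ Finset.range (n + 1), i) * 2 + 2 * (n + 1) := by ring
        _ = (n + 1) * n + 2 * (n + 1) := by rw [hg]
        _ = (n + 1) * ((n + 1) + 1) := by ring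
  rw [h2]
  have hc : (2 : ℂ) * ((∑ i ∈ Finset.range k, (k - i) : ℕ) : ℂ) = (k : ℂ) * ((k : ℂ) + 1) := by
    have := congrArg (fun n : ℕ => (n : ℂ)) h3
    push_cast at this ⊢
    linear_combination this
  rw [hc]
  norm_num
  ring

lemma key : D.pmul D = F * (Z * Z * Z * Z) := by
  rw [A1, M_eq_F_mul_Z]
  unfold D
  ring

lemma Zc : (↗Z : ℕ → ℂ) = ↗(ζ : ArithmeticFunction ℕ) := by
  funext n
  simp [Z]

lemma hZsum {s : ℂ} (hs : 1 < s.re) : LSeriesSummable ↗Z s := by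
  rw [Zc]
  exact ArithmeticFunction.LSeriesSummable_zeta_iff.mpr hs

lemma hFsum {s : ℂ} (hs : 1 < s.re) : LSeriesSummable ↗F s := by
  refine LSeriesSummable_of_bounded_of_one_lt_re (m := 1) (fun n _ => ?_) hs
  rw [F_apply]
  split_ifs with h
  · rw [Complex.norm_intCast]
    have h2 : |μ n.sqrt| ≤ 1 := by
      rw [abs_moebius]
      split_ifs <;> norm_num
    exact_mod_cast h2
  · simp

lemma L_F {s : ℂ} : LSeries ↗F s = LSeries ↗(μ) (2 * s) := by
  unfold LSeries
  rw [← Function.Injective.tsum_eq (g := fun m : ℕ => m ^ 2)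
    (fun a b hab => Nat.pow_left_injective (by norm_num) hab) ?hsupp]
  case hsupp =>
    intro n hn
    rcases eq_or_ne n 0 with rfl | h0
    · simp [LSeries.term_zero] at hn
    have hF : F n ≠ 0 := by
      intro h
      apply hn
      rw [LSeries.term_of_ne_zero h0]
      show F n / _ = 0
      rw [h, zero_div]
    have hsq : IsSquare n := by
      by_contra h
      exact hF (by rw [F_apply, if_neg h])
    obtain ⟨c, hc⟩ := hsq
    exact ⟨c, by simpa [sq] using hc.symm⟩
  refine tsum_congr fun m => ?_
  rcases eq_or_ne m 0 with rfl | hm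
  · simp
  have hm2 : m ^ 2 ≠ 0 := pow_ne_zero 2 hm
  rw [LSeries.term_of_ne_zero hm2, LSeries.term_of_ne_zero hm]
  have hFm : (↗F : ℕ → ℂ) (m ^ 2) = ((μ m : ℤ) : ℂ) := by
    show F (m ^ 2) = _
    have hsq : IsSquare (m ^ 2) := ⟨m, sq m⟩
    rw [F_apply, if_pos hsq, sq, Nat.sqrt_eq]
  show F (m ^ 2) / _ = _
  rw [show F (m ^ 2) = ((μ m : ℤ) : ℂ) from hFm]
  congr 1
  have harg : ((m : ℂ)).arg = 0 := Complex.natCast_arg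
  rw [show ((m ^ 2 : ℕ) : ℂ) = (m : ℂ) ^ 2 by push_cast; ring,
    Complex.cpow_ofNat_mul' (n := 2) (by rw [harg]; simpa using Real.pi_pos)
      (by rw [harg]; simpa using Real.pi_pos.le) s]

lemma L_mu {s : ℂ} (hs : 1 < s.re) : LSeries ↗(μ) (2 * s) = (riemannZeta (2 * s))⁻¹ := by
  have hs2 : 1 < (2 * s).re := by
    have : (2 * s).re = 2 * s.re := by simp [Complex.mul_re]
    rw [this]; linarith
  have h1 := ArithmeticFunction.LSeries_zeta_mul_Lseries_moebius hs2
  rw [ArithmeticFunction.LSeries_zeta_eq_riemannZeta hs2] at h1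
  rw [mul_comm] at h1
  exact eq_inv_of_mul_eq_one_left h1

lemma L_main {s : ℂ} (hs : 1 < s.re) :
    LSeries ↗(D.pmul D) s = riemannZeta s ^ 4 / riemannZeta (2 * s) := by
  have hZ := hZsum hs
  have hF := hFsum hs
  have hZ2 := ArithmeticFunction.LSeriesSummable_mul hZ hZ
  have hZ3 := ArithmeticFunction.LSeriesSummable_mul hZ2 hZ
  have hZ4 := ArithmeticFunction.LSeriesSummable_mul hZ3 hZ
  have hLZ : LSeries ↗Z s = riemannZeta s := by
    rw [Zc]
    exact ArithmeticFunction.LSeries_zeta_eq_riemannZeta hs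
  rw [key, show Z * Z * Z * Z = ((Z * Z) * Z) * Z by ring,
    ArithmeticFunction.LSeries_mul' hF hZ4,
    ArithmeticFunction.LSeries_mul' hZ3 hZ,
    ArithmeticFunction.LSeries_mul' hZ2 hZ,
    ArithmeticFunction.LSeries_mul' hZ hZ,
    hLZ, L_F, L_mu hs]
  ring

end DivSqAux

theorem divisor_squared_dirichlet_series (s : ℂ) (hs : 1 < s.re) :
    ∑' n : ℕ+, (((n : ℕ).divisors.card : ℂ) ^ 2 / (n : ℕ) ^ s) =
      riemannZeta s ^ 4 / riemannZeta (2 * s) := by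
  rw [← DivSqAux.L_main hs]
  unfold LSeries
  rw [← Function.Injective.tsum_eq (g := fun n : ℕ+ => (n : ℕ)) PNat.coe_injective ?hsupp]
  case hsupp =>
    intro n hn
    rcases eq_or_ne n 0 with rfl | h0
    · simp at hn
    exact ⟨⟨n, Nat.pos_of_ne_zero h0⟩, rfl⟩
  refine tsum_congr fun n => ?_
  rw [LSeries.term_of_ne_zero n.pos.ne']
  show _ = (DivSqAux.D.pmul DivSqAux.D) (n : ℕ) / ((n : ℕ) : ℂ) ^ s
  rw [ArithmeticFunction.pmul_apply, DivSqAux.D_apply n.pos.ne', sq]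
end

section
/- For complex s and a, b with Re(s) > max(1, Re(a)+1, Re(b)+1, Re(a+b)+1), ∑_{n=1}^∞ σ_a(n)σ_b(n)/n^s = ζ(s)ζ(s−a)ζ(s−b)ζ(s−a−b)/ζ(2s−a−b). -/
open ArithmeticFunction Complex Finset LSeries.notation
open scoped ArithmeticFunction.zeta ArithmeticFunction.Moebius

/-! Auxiliary definitions -/

private noncomputable def Pc (c : ℂ) : ArithmeticFunction ℂ :=
  ⟨fun n => if n = 0 then 0 else (n : ℂ) ^ c, by simp⟩

private lemma Pc_apply {c : ℂ} {n : ℕ} (hn : n ≠ 0) : Pc c n = (n : ℂ) ^ c := by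
  simp [Pc, hn]

private lemma Pc_mult (c : ℂ) : (Pc c).IsMultiplicative := by
  refine ⟨by simp [Pc], fun {m n} hmn => ?_⟩
  rcases eq_or_ne m 0 with rfl | hm
  · simp [Pc]
  rcases eq_or_ne n 0 with rfl | hn
  · simp [Pc]
  rw [Pc_apply (mul_ne_zero hm hn), Pc_apply hm, Pc_apply hn, Nat.cast_mul,
    natCast_mul_natCast_cpow]

private noncomputable def Sc (c : ℂ) : ArithmeticFunction ℂ := ↑ζ * Pc c

private lemma Sc_apply {c : ℂ} (n : ℕ) : Sc c n = ∑ d ∈ n.divisors, (d : ℂ) ^ c := by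
  rw [Sc, coe_zeta_mul_apply]
  exact Finset.sum_congr rfl fun d hd => Pc_apply (Nat.pos_of_mem_divisors hd).ne'

private lemma Sc_mult (c : ℂ) : (Sc c).IsMultiplicative :=
  isMultiplicative_zeta.natCast.mul (Pc_mult c)

private noncomputable def Tf (c : ℂ) : ArithmeticFunction ℂ :=
  ⟨fun n => if Nat.sqrt n ^ 2 = n then (μ (Nat.sqrt n) : ℂ) * (Nat.sqrt n : ℂ) ^ c else 0,
   by simp⟩

private lemma Tf_apply (c : ℂ) (n : ℕ) :
    Tf c n = if Nat.sqrt n ^ 2 = n then (μ (Nat.sqrt n) : ℂ) * (Nat.sqrt n : ℂ) ^ c else 0 :=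
  rfl

private lemma sqrt_sq_ne_mul {m n : ℕ} (h : Nat.Coprime m n) (hm : Nat.sqrt m ^ 2 ≠ m) :
    Nat.sqrt (m * n) ^ 2 ≠ m * n := by
  intro hc
  obtain ⟨d, hd⟩ : ∃ d, m = d ^ 2 :=
    exists_eq_pow_of_mul_eq_pow (Nat.isUnit_iff.mpr h) hc.symm
  exact hm (by rw [hd, Nat.sqrt_eq'])

private lemma Tf_mult (c : ℂ) : (Tf c).IsMultiplicative := by
  refine ⟨by simp [Tf_apply], fun {m n} hmn => ?_⟩
  by_cases hm : Nat.sqrt m ^ 2 = m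
  · by_cases hn : Nat.sqrt n ^ 2 = n
    · have hmn2 : m * n = (Nat.sqrt m * Nat.sqrt n) ^ 2 := by rw [mul_pow, hm, hn]
      have hsq : Nat.sqrt (m * n) = Nat.sqrt m * Nat.sqrt n := by rw [hmn2, Nat.sqrt_eq']
      have hdm : Nat.sqrt m ∣ m := ⟨Nat.sqrt m, by nth_rewrite 1 [← hm]; rw [pow_two]⟩
      have hdn : Nat.sqrt n ∣ n := ⟨Nat.sqrt n, by nth_rewrite 1 [← hn]; rw [pow_two]⟩
      have hco : (Nat.sqrt m).Coprime (Nat.sqrt n) :=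
        Nat.Coprime.coprime_dvd_left hdm (Nat.Coprime.coprime_dvd_right hdn hmn)
      have hcond : Nat.sqrt (m * n) ^ 2 = m * n := by rw [hsq]; exact hmn2.symm
      rw [Tf_apply c (m * n), Tf_apply c m, Tf_apply c n, if_pos hcond, if_pos hm, if_pos hn,
        hsq, isMultiplicative_moebius.map_mul_of_coprime hco]
      push_cast
      rw [natCast_mul_natCast_cpow]
      ring
    · rw [Tf_apply c (m * n), Tf_apply c n, if_neg hn, mul_zero, if_neg]
      rw [mul_comm]
      exact sqrt_sq_ne_mul hmn.symm hn
  · rw [Tf_apply c (m * n), Tf_apply c m, if_neg hm, zero_mul, if_neg]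
    exact sqrt_sq_ne_mul hmn hm

private lemma Tf_apply_pp {c : ℂ} {p : ℕ} (hp : p.Prime) (k : ℕ) :
    Tf c (p ^ k) = if k = 0 then 1 else if k = 2 then -(p : ℂ) ^ c else 0 := by
  rw [Tf_apply]
  rcases Nat.even_or_odd k with ⟨j, hj⟩ | hodd
  · subst hj
    have h1 : p ^ (j + j) = (p ^ j) ^ 2 := by ring
    rw [h1, Nat.sqrt_eq']
    rw [if_pos rfl]
    match j with
    | 0 => simp
    | 1 => simp [moebius_apply_prime hp]
    | (j + 2) =>
      rw [moebius_apply_prime_pow hp (by omega)]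
      rw [if_neg (by omega), if_neg (by omega), if_neg (by omega)]
      simp
  · have hne : Nat.sqrt (p ^ k) ^ 2 ≠ p ^ k := by
      intro hc
      have hdvd : Nat.sqrt (p ^ k) ∣ p ^ k := ⟨Nat.sqrt (p ^ k), by nth_rewrite 1 [← hc]; rw [pow_two]⟩
      obtain ⟨j, hj, hj2⟩ := (Nat.dvd_prime_pow hp).mp hdvd
      rw [hj2, ← pow_mul] at hc
      have h2jk := Nat.pow_right_injective hp.two_le hc
      obtain ⟨t, ht⟩ := hodd
      omega
    rw [if_neg hne, if_neg (by rintro rfl; exact (Nat.not_odd_iff_even.mpr Even.zero) hodd),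
      if_neg (by rintro rfl; exact (Nat.not_odd_iff_even.mpr (by decide)) hodd)]

private lemma mul_apply_pp (f g : ArithmeticFunction ℂ) {p : ℕ} (hp : p.Prime) (k : ℕ) :
    (f * g) (p ^ k) = ∑ i ∈ range (k + 1), f (p ^ i) * g (p ^ (k - i)) := by
  rw [mul_apply, Nat.sum_divisorsAntidiagonal (f · * g ·), Nat.sum_divisors_prime_pow hp]
  refine Finset.sum_congr rfl fun i hi => ?_
  rw [Nat.pow_div (Finset.mem_range_succ_iff.mp hi) hp.pos]

/-! Geometric sums -/

private noncomputable def geom (x : ℂ) (k : ℕ) : ℂ := ∑ i ∈ range (k + 1), x ^ i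

private lemma geom_zero (x : ℂ) : geom x 0 = 1 := by simp [geom]

private lemma geom_mul_pow (x : ℂ) (u v : ℕ) :
    geom x u * x ^ v + ∑ i ∈ range v, x ^ i = geom x (u + v) := by
  induction u with
  | zero =>
    rw [geom_zero, zero_add, one_mul, geom, Finset.sum_range_succ]
    ring
  | succ u ih =>
    have h1 : geom x (u + 1) = geom x u + x ^ (u + 1) := Finset.sum_range_succ _ _
    have h2 : geom x (u + 1 + v) = geom x (u + v) + x ^ (u + v + 1) := by
      rw [show u + 1 + v = (u + v) + 1 by ring]
      exact Finset.sum_range_succ _ _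
    rw [h1, h2, ← ih, pow_add, pow_add, pow_add]
    ring

private lemma mul_geom (x : ℂ) (u : ℕ) : x * geom x u = geom x (u + 1) - 1 := by
  have h := geom_mul_pow x u 1
  rw [Finset.sum_range_one, pow_one, pow_zero] at h
  linear_combination h

private lemma geom_key (x : ℂ) (u v : ℕ) :
    geom x (u + 1) * geom x (v + 1) - x * geom x u * geom x v = geom x (u + v + 2) := by
  have h2 := mul_geom x u
  have h3 := geom_mul_pow x (u + 1) (v + 1)
  have h4 : ∑ i ∈ range (v + 1), x ^ i = geom x v := rfl
  have h1 : geom x (v + 1) = geom x v + x ^ (v + 1) := Finset.sum_range_succ _ _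
  rw [h4, show u + 1 + (v + 1) = u + v + 2 by ring] at h3
  linear_combination geom x (u + 1) * h1 - geom x v * h2 + h3

private noncomputable def FF (x y : ℂ) (k : ℕ) : ℂ :=
  ∑ u ∈ range (k + 1), geom x u * (y ^ (k - u) * geom x (k - u))

private lemma FF_rec (x y : ℂ) (k : ℕ) :
    FF x y k - (if 2 ≤ k then x * y * FF x y (k - 2) else 0) = geom x k * geom y k := by
  match k with
  | 0 => simp [FF, geom]
  | 1 =>
    rw [if_neg (by omega)]
    simp only [FF, geom, Finset.sum_range_succ, Finset.sum_range_zero]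
    norm_num
    ring
  | (m + 2) =>
    rw [if_pos (by omega), show m + 2 - 2 = m from rfl]
    have key : ∀ u ∈ range (m + 1),
        geom x (u + 1) * (y ^ (m + 2 - (u + 1)) * geom x (m + 2 - (u + 1)))
          - x * y * (geom x u * (y ^ (m - u) * geom x (m - u)))
        = geom x (m + 2) * y ^ (m + 1 - u) := by
      intro u hu
      have hu' : u ≤ m := Finset.mem_range_succ_iff.mp hu
      have h1 : m + 2 - (u + 1) = (m - u) + 1 := by omega
      have h2 : m + 1 - u = (m - u) + 1 := by omega
      rw [h1, h2, show m + 2 = u + (m - u) + 2 by omega, ← geom_key x u (m - u), pow_succ]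
      ring
    have expand : FF x y (m + 2)
        = (∑ u ∈ range (m + 1),
            geom x (u + 1) * (y ^ (m + 2 - (u + 1)) * geom x (m + 2 - (u + 1))))
          + geom x 0 * (y ^ (m + 2 - 0) * geom x (m + 2 - 0))
          + geom x (m + 2) * (y ^ (m + 2 - (m + 2)) * geom x (m + 2 - (m + 2))) := by
      rw [FF, Finset.sum_range_succ, Finset.sum_range_succ']
      try ring
    have expandF : x * y * FF x y m
        = ∑ u ∈ range (m + 1), x * y * (geom x u * (y ^ (m - u) * geom x (m - u))) := by
      rw [FF, Finset.mul_sum]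
    rw [expand, expandF]
    have hsum : (∑ u ∈ range (m + 1),
            geom x (u + 1) * (y ^ (m + 2 - (u + 1)) * geom x (m + 2 - (u + 1))))
          - ∑ u ∈ range (m + 1), x * y * (geom x u * (y ^ (m - u) * geom x (m - u)))
        = ∑ u ∈ range (m + 1), geom x (m + 2) * y ^ (m + 1 - u) := by
      rw [← Finset.sum_sub_distrib]
      exact Finset.sum_congr rfl key
    have hrefl : ∑ u ∈ range (m + 1), y ^ (m + 1 - u) = ∑ u ∈ range (m + 1), y ^ (u + 1) := by
      rw [← Finset.sum_range_reflect]
      refine Finset.sum_congr rfl fun j hj => ?_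
      congr 1
      have := Finset.mem_range.mp hj
      omega
    have hgy : geom y (m + 2) = (∑ u ∈ range (m + 1), y ^ (u + 1)) + 1 + y ^ (m + 2) := by
      rw [geom, Finset.sum_range_succ, Finset.sum_range_succ', pow_zero]
    have hmain : (∑ u ∈ range (m + 1),
            geom x (u + 1) * (y ^ (m + 2 - (u + 1)) * geom x (m + 2 - (u + 1))))
          - ∑ u ∈ range (m + 1), x * y * (geom x u * (y ^ (m - u) * geom x (m - u)))
        = geom x (m + 2) * ∑ u ∈ range (m + 1), y ^ (u + 1) := by
      rw [hsum, ← Finset.mul_sum, hrefl]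
    rw [show ∀ A B C D : ℂ, A + B + C - D = (A - D) + B + C from fun A B C D => by ring,
      hmain, geom_zero, hgy]
    simp only [Nat.sub_zero, Nat.sub_self, pow_zero, geom_zero, one_mul, mul_one]
    ring

/-! Key arithmetic identity -/

private lemma cast_pp (p i : ℕ) (c : ℂ) : ((p ^ i : ℕ) : ℂ) ^ c = ((p : ℂ) ^ c) ^ i := by
  rw [Nat.cast_pow, ← natCast_cpow_natCast_mul, cpow_nat_mul]

private lemma key_identity (a b : ℂ) :
    (Sc a).pmul (Sc b) = Tf (a + b) * (Sc a * (Pc b * Pc (a + b))) := by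
  rw [ArithmeticFunction.IsMultiplicative.eq_iff_eq_on_prime_powers _ ((Sc_mult a).pmul (Sc_mult b)) _
    ((Tf_mult (a + b)).mul ((Sc_mult a).mul ((Pc_mult b).mul (Pc_mult (a + b)))))]
  intro p k hp
  set x : ℂ := (p : ℂ) ^ a with hx
  set y : ℂ := (p : ℂ) ^ b with hy
  have hp0 : (p : ℂ) ≠ 0 := Nat.cast_ne_zero.mpr hp.pos.ne'
  have hxy : (p : ℂ) ^ (a + b) = x * y := cpow_add _ _ hp0
  have hSa : ∀ (c : ℂ) (j : ℕ), Sc c (p ^ j) = geom ((p : ℂ) ^ c) j := by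
    intro c j
    rw [Sc_apply, Nat.sum_divisors_prime_pow hp, geom]
    exact Finset.sum_congr rfl fun i _ => cast_pp p i c
  have hPc : ∀ (c : ℂ) (j : ℕ), Pc c (p ^ j) = ((p : ℂ) ^ c) ^ j := fun c j => by
    rw [Pc_apply (pow_ne_zero j hp.pos.ne'), cast_pp]
  have hPbP : ∀ j : ℕ, (Pc b * Pc (a + b)) (p ^ j) = y ^ j * geom x j := by
    intro j
    rw [mul_apply_pp _ _ hp]
    have : ∀ i ∈ range (j + 1),
        Pc b (p ^ i) * Pc (a + b) (p ^ (j - i)) = x ^ (j - i) * y ^ j := by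
      intro i hi
      have hi' : i ≤ j := Finset.mem_range_succ_iff.mp hi
      rw [hPc, hPc, hxy, mul_pow, show j = i + (j - i) by omega, pow_add]
      ring_nf
      rw [show i + (j - i) - i = j - i by omega]
      try ring
    rw [Finset.sum_congr rfl this, ← Finset.sum_mul, mul_comm, geom]
    congr 1
    rw [← Finset.sum_range_reflect]
    refine Finset.sum_congr rfl fun i hi => ?_
    congr 1
    have := Finset.mem_range.mp hi
    omega
  have hV : ∀ j : ℕ, (Sc a * (Pc b * Pc (a + b))) (p ^ j) = FF x y j := by
    intro j
    rw [mul_apply_pp _ _ hp, FF]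
    exact Finset.sum_congr rfl fun i _ => by rw [hSa, hPbP, ← hx]
  rw [pmul_apply, hSa, hSa, mul_apply_pp _ _ hp]
  have hterm : ∀ i ∈ range (k + 1),
      Tf (a + b) (p ^ i) * (Sc a * (Pc b * Pc (a + b))) (p ^ (k - i))
        = (if i = 0 then FF x y (k - i) else 0)
          + (if i = 2 then -(x * y) * FF x y (k - i) else 0) := by
    intro i _
    rw [Tf_apply_pp hp, hV, hxy]
    split_ifs with h1 h2 <;> simp_all
  rw [Finset.sum_congr rfl hterm, Finset.sum_add_distrib,
    Finset.sum_ite_eq' (range (k + 1)) 0, Finset.sum_ite_eq' (range (k + 1)) 2,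
    if_pos (Finset.mem_range.mpr (by omega))]
  have hFr := FF_rec x y k
  simp only [Finset.mem_range, Nat.sub_zero]
  by_cases h2k : 2 ≤ k
  · rw [if_pos h2k] at hFr
    rw [if_pos (show 2 < k + 1 by omega)]
    linear_combination -hFr
  · rw [if_neg h2k] at hFr
    rw [if_neg (show ¬ 2 < k + 1 by omega)]
    linear_combination -hFr

/-! Analytic lemmas -/

private lemma term_Pc (c s : ℂ) (n : ℕ) :
    LSeries.term ↗(Pc c) s n = LSeries.term 1 (s - c) n := by
  rcases eq_or_ne n 0 with rfl | hn
  · simp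
  rw [LSeries.term_of_ne_zero hn, LSeries.term_of_ne_zero hn, Pc_apply hn, Pi.one_apply,
    cpow_sub _ _ (Nat.cast_ne_zero.mpr hn), one_div_div]

private lemma summable_Pc (c s : ℂ) (h : 1 < (s - c).re) : LSeriesSummable ↗(Pc c) s :=
  (LSeriesSummable_one_iff.mpr h).congr fun n => (term_Pc c s n).symm

private lemma LSeries_Pc (c s : ℂ) (h : 1 < (s - c).re) :
    LSeries ↗(Pc c) s = riemannZeta (s - c) := by
  rw [show LSeries ↗(Pc c) s = LSeries 1 (s - c) from tsum_congr (term_Pc c s)]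
  exact LSeries_one_eq_riemannZeta h

private lemma coe_zeta_eq : ↗((ζ : ArithmeticFunction ℕ) : ArithmeticFunction ℂ) = ↗ζ := by
  funext n
  simp [natCoe_apply]

private lemma term_Tf (c s : ℂ) (m : ℕ) :
    LSeries.term ↗(Tf c) s (m ^ 2) = LSeries.term ↗μ (2 * s - c) m := by
  rcases eq_or_ne m 0 with rfl | hm
  · simp
  have hm2 : m ^ 2 ≠ 0 := pow_ne_zero _ hm
  have hmc : (m : ℂ) ≠ 0 := Nat.cast_ne_zero.mpr hm
  rw [LSeries.term_of_ne_zero hm2, LSeries.term_of_ne_zero hm]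
  have hTf : Tf c (m ^ 2) = (μ m : ℂ) * (m : ℂ) ^ c := by
    rw [Tf_apply, Nat.sqrt_eq', if_pos rfl]
  have h2 : ((m ^ 2 : ℕ) : ℂ) ^ s = (m : ℂ) ^ (2 * s) := by
    rw [Nat.cast_pow, ← natCast_cpow_natCast_mul]
    norm_num
  rw [hTf, h2, cpow_sub _ _ hmc]
  have hn1 : (m : ℂ) ^ (2 * s) ≠ 0 := fun h => hmc ((cpow_eq_zero_iff _ _).mp h).1
  have hn2 : (m : ℂ) ^ c ≠ 0 := fun h => hmc ((cpow_eq_zero_iff _ _).mp h).1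
  field_simp

private lemma Tf_supp (c s : ℂ) :
    ∀ n ∉ Set.range (fun m : ℕ => m ^ 2), LSeries.term ↗(Tf c) s n = 0 := by
  intro n hn
  rcases eq_or_ne n 0 with rfl | h0
  · simp
  rw [LSeries.term_of_ne_zero h0, Tf_apply, if_neg (fun hc => hn ⟨Nat.sqrt n, hc⟩)]
  simp

private lemma sq_inj : Function.Injective (fun m : ℕ => m ^ 2) :=
  fun _ _ h => Nat.pow_left_injective (by omega) h

private lemma summable_Tf (c s : ℂ) (h : 1 < (2 * s - c).re) : LSeriesSummable ↗(Tf c) s := by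
  have hμ : LSeriesSummable ↗μ (2 * s - c) := LSeriesSummable_moebius_iff.mpr h
  exact (sq_inj.summable_iff (Tf_supp c s)).mp (hμ.congr fun m => (term_Tf c s m).symm)

private lemma LSeries_Tf (c s : ℂ) (h : 1 < (2 * s - c).re) :
    LSeries ↗(Tf c) s = (riemannZeta (2 * s - c))⁻¹ := by
  have h1 : LSeries ↗(Tf c) s = LSeries ↗μ (2 * s - c) := by
    rw [LSeries, LSeries, ← sq_inj.tsum_eq (Function.support_subset_iff'.mpr (Tf_supp c s))]
    exact tsum_congr fun m => term_Tf c s m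
  have h2 := ArithmeticFunction.LSeries_zeta_mul_Lseries_moebius h
  rw [ArithmeticFunction.LSeries_zeta_eq_riemannZeta h] at h2
  rw [h1]
  exact eq_inv_of_mul_eq_one_left (by rw [mul_comm]; exact h2)

private lemma tsum_pnat_eq (f : ℕ → ℂ) (hf : f 0 = 0) : ∑' n : ℕ+, f n = ∑' n : ℕ, f n := by
  have hinj : Function.Injective ((↑) : ℕ+ → ℕ) := PNat.coe_injective
  refine hinj.tsum_eq ?_
  intro n hn
  rcases eq_or_ne n 0 with rfl | h0
  · exact absurd hf hn
  exact ⟨⟨n, Nat.pos_of_ne_zero h0⟩, rfl⟩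

/-! Main theorem -/

theorem ramanujan_identity (s a b : ℂ)
    (hs : max (max 1 (a.re + 1)) (max (b.re + 1) ((a + b).re + 1)) < s.re) :
    ∑' n : ℕ+, ((∑ d ∈ (n : ℕ).divisors, (d : ℂ) ^ a) *
        (∑ d ∈ (n : ℕ).divisors, (d : ℂ) ^ b) / (n : ℕ) ^ s) =
      riemannZeta s * riemannZeta (s - a) * riemannZeta (s - b) *
        riemannZeta (s - a - b) / riemannZeta (2 * s - a - b) := by
  simp only [max_lt_iff] at hs
  obtain ⟨⟨h1, ha⟩, hb, hab⟩ := hs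
  have hsa : 1 < (s - a).re := by rw [Complex.sub_re]; linarith
  have hsb : 1 < (s - b).re := by rw [Complex.sub_re]; linarith
  have hsab : 1 < (s - (a + b)).re := by rw [Complex.sub_re]; linarith
  have hw : 1 < (2 * s - (a + b)).re := by
    rw [Complex.sub_re, show (2 * s).re = 2 * s.re by simp [Complex.mul_re]]
    linarith
  have hζs : LSeriesSummable ↗((ζ : ArithmeticFunction ℕ) : ArithmeticFunction ℂ) s := by
    rw [coe_zeta_eq]
    exact ArithmeticFunction.LSeriesSummable_zeta_iff.mpr h1
  have hPa := summable_Pc a s hsa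
  have hPb := summable_Pc b s hsb
  have hPab := summable_Pc (a + b) s hsab
  have hT := summable_Tf (a + b) s hw
  have hSaSum : LSeriesSummable ↗(Sc a) s := by
    rw [Sc]; exact LSeriesSummable_mul hζs hPa
  have hVSum : LSeriesSummable ↗(Sc a * (Pc b * Pc (a + b))) s :=
    LSeriesSummable_mul hSaSum (LSeriesSummable_mul hPb hPab)
  have hL : LSeries ↗((Sc a).pmul (Sc b)) s =
      (riemannZeta (2 * s - (a + b)))⁻¹ *
        (riemannZeta (s - a) * (riemannZeta (s - b) * riemannZeta (s - (a + b)))) *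
          riemannZeta s := by
    rw [key_identity a b, LSeries_mul' hT hVSum, LSeries_mul' hSaSum
      (LSeriesSummable_mul hPb hPab), LSeries_Tf _ _ hw]
    rw [show Sc a = ↑ζ * Pc a from rfl, LSeries_mul' hζs hPa,
      LSeries_mul' hPb hPab]
    rw [coe_zeta_eq, ArithmeticFunction.LSeries_zeta_eq_riemannZeta h1,
      LSeries_Pc a s hsa, LSeries_Pc b s hsb, LSeries_Pc (a + b) s hsab]
    ring
  have hconn : (∑' n : ℕ+, ((∑ d ∈ (n : ℕ).divisors, (d : ℂ) ^ a) *
      (∑ d ∈ (n : ℕ).divisors, (d : ℂ) ^ b) / (n : ℕ) ^ s))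
      = LSeries ↗((Sc a).pmul (Sc b)) s := by
    rw [LSeries, ← tsum_pnat_eq _ (LSeries.term_zero _ _)]
    refine tsum_congr fun n => ?_
    rw [LSeries.term_of_ne_zero n.pos.ne' _ s, pmul_apply, Sc_apply, Sc_apply]
  rw [hconn, hL, show s - a - b = s - (a + b) by ring, show 2 * s - a - b = 2 * s - (a + b) by ring,
    div_eq_mul_inv]
  ring
end

section
/- For every real x > 0, e^{−x} − 2e^{−2x} = ∑_{n=1}^∞ μ(n)/(e^{xn} + 1), where μ is the Möbius function and the series converges absolutely. -/
open ArithmeticFunction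

lemma sum_moebius_antidiag (k : ℕ) :
    (∑ p ∈ Nat.divisorsAntidiagonal k, (moebius p.1 : ℝ)) = if k = 1 then 1 else 0 := by
  have h := congrArg (fun f : ArithmeticFunction ℝ => f k)
    (coe_moebius_mul_coe_zeta (R := ℝ))
  simp only [mul_apply, one_apply] at h
  rw [← h]
  refine Finset.sum_congr rfl fun p hp => ?_
  have h2 := (Nat.mem_divisorsAntidiagonal.mp hp)
  have hp2 : p.2 ≠ 0 := by
    intro h0
    exact h2.2 (by rw [← h2.1, h0, mul_zero])
  simp [natCoe_apply, zeta_apply, hp2]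

lemma lambert_key (x : ℝ) (hx : 0 < x) :
    Summable (fun n : ℕ+ => |(moebius (n : ℕ) : ℝ) / (Real.exp (x * n) - 1)|) ∧
    ∑' n : ℕ+, (moebius (n : ℕ) : ℝ) / (Real.exp (x * n) - 1) = Real.exp (-x) := by
  set q : ℝ := Real.exp (-x) with hqdef
  have hq0 : 0 < q := Real.exp_pos _
  have hq1 : q < 1 := by
    rw [hqdef, Real.exp_lt_one_iff]
    linarith
  have hqn : ∀ n : ℕ, q ^ n = Real.exp (-(x * n)) := by
    intro n
    rw [hqdef, ← Real.exp_nat_mul]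
    ring_nf
  have hden : ∀ n : ℕ, 0 < n → 0 < Real.exp (x * n) - 1 := by
    intro n hn
    have : (1 : ℝ) < Real.exp (x * n) := by
      rw [Real.one_lt_exp_iff]
      positivity
    linarith
  have hqnlt : ∀ n : ℕ, 0 < n → q ^ n < 1 := by
    intro n hn
    calc q ^ n ≤ q ^ 1 := pow_le_pow_of_le_one hq0.le hq1.le hn
    _ = q := pow_one q
    _ < 1 := hq1
  have hinv : ∀ n : ℕ, 0 < n → (Real.exp (x * n) - 1)⁻¹ = q ^ n * (1 - q ^ n)⁻¹ := by
    intro n hn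
    have hE : Real.exp (x * n) ≠ 0 := Real.exp_ne_zero _
    have hE1 : Real.exp (x * n) - 1 ≠ 0 := (hden n hn).ne'
    have h1 : 1 - q ^ n ≠ 0 := by
      have := hqnlt n hn
      intro h; rw [sub_eq_zero] at h; linarith
    rw [hqn n, Real.exp_neg]
    field_simp
  -- summability over ℕ+
  have hgeom : Summable fun n : ℕ => q ^ n := summable_geometric_of_lt_one hq0.le hq1
  have hgeomP : Summable fun n : ℕ+ => q ^ (n : ℕ) :=
    hgeom.comp_injective PNat.coe_injective
  have hsum1 : Summable (fun n : ℕ+ => |(moebius (n : ℕ) : ℝ) / (Real.exp (x * n) - 1)|) := by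
    refine Summable.of_nonneg_of_le (fun n => abs_nonneg _) (fun n => ?_)
      (hgeomP.mul_right (1 - q)⁻¹)
    have hd := hden n n.2
    have hmu : |(moebius (n : ℕ) : ℝ)| ≤ 1 := by
      have := abs_moebius_le_one (n := (n : ℕ))
      calc |(moebius (n : ℕ) : ℝ)| = (|moebius (n : ℕ)| : ℤ) := by
            push_cast [Int.cast_abs]; ring
        _ ≤ 1 := by exact_mod_cast this
    calc |(moebius (n : ℕ) : ℝ) / (Real.exp (x * n) - 1)|
        = |(moebius (n : ℕ) : ℝ)| * (Real.exp (x * n) - 1)⁻¹ := by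
          rw [abs_div, abs_of_pos hd, div_eq_mul_inv]
      _ ≤ 1 * (Real.exp (x * n) - 1)⁻¹ := by gcongr
      _ = q ^ (n : ℕ) * (1 - q ^ (n : ℕ))⁻¹ := by rw [one_mul, hinv n n.2]
      _ ≤ q ^ (n : ℕ) * (1 - q)⁻¹ := by
          gcongr
          · calc q ^ (n : ℕ) ≤ q ^ 1 := pow_le_pow_of_le_one hq0.le hq1.le n.2
              _ = q := pow_one q
  refine ⟨hsum1, ?_⟩
  -- the double-sum function
  set F : ℕ × ℕ → ℝ := fun p => if p.2 = 0 then 0 else (moebius p.1 : ℝ) * q ^ (p.1 * p.2)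
    with hFdef
  have habs : Summable fun p : ℕ × ℕ => |F p| := by
    have hprod : Summable fun p : ℕ × ℕ => q⁻¹ * (q ^ p.1 * q ^ p.2) :=
      (hgeom.mul_of_nonneg hgeom (fun n => by positivity) fun n => by positivity).mul_left _
    refine Summable.of_nonneg_of_le (fun p => abs_nonneg _) (fun p => ?_) hprod
    rcases p with ⟨n, m⟩
    rcases eq_or_ne m 0 with rfl | hm
    · simp only [hFdef, if_pos rfl, abs_zero]
      positivity
    have hmu : |(moebius n : ℝ)| ≤ 1 := by
      have := abs_moebius_le_one (n := n)
      calc |(moebius n : ℝ)| = (|moebius n| : ℤ) := by push_cast [Int.cast_abs]; ring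
        _ ≤ 1 := by exact_mod_cast this
    rcases eq_or_ne n 0 with rfl | hn
    · simp only [hFdef, if_neg hm, Nat.cast_zero, ArithmeticFunction.map_zero, Int.cast_zero,
        zero_mul, abs_zero]
      positivity
    have hnm : n + m ≤ n * m + 1 := by
      have h1 : 1 ≤ n := Nat.one_le_iff_ne_zero.mpr hn
      have h2 : 1 ≤ m := Nat.one_le_iff_ne_zero.mpr hm
      nlinarith
    have h3 : q ^ (n * m) * q ≤ q ^ n * q ^ m := by
      rw [← pow_succ, ← pow_add]
      exact pow_le_pow_of_le_one hq0.le hq1.le hnm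
    have h4 : q ^ (n * m) ≤ q⁻¹ * (q ^ n * q ^ m) := by
      rw [le_inv_mul_iff₀ hq0]
      linarith [h3]
    calc |F (n, m)| = |(moebius n : ℝ)| * q ^ (n * m) := by
          rw [hFdef]
          simp only [if_neg hm, abs_mul]
          rw [abs_of_pos (by positivity : (0:ℝ) < q ^ (n * m))]
      _ ≤ 1 * q ^ (n * m) := by gcongr
      _ = q ^ (n * m) := one_mul _
      _ ≤ q⁻¹ * (q ^ n * q ^ m) := h4
  have hF : Summable F := habs.of_abs
  -- rows: tsum over pairs equals tsum over ℕ of row sums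
  have hrow : ∀ n : ℕ, ∑' m : ℕ, F (n, m) =
      if n = 0 then 0 else (moebius n : ℝ) / (Real.exp (x * n) - 1) := by
    intro n
    rcases eq_or_ne n 0 with rfl | hn
    · simp only [if_pos rfl]
      have : ∀ m : ℕ, F (0, m) = 0 := by
        intro m
        rcases eq_or_ne m 0 with rfl | hm
        · simp [hFdef]
        · simp [hFdef, hm]
      simp [this]
    · rw [if_neg hn]
      have hn' : 0 < n := Nat.pos_of_ne_zero hn
      set r : ℝ := q ^ n with hrdef
      have hr0 : 0 < r := by positivity
      have hr1 : r < 1 := hqnlt n hn'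
      have hrowsum : Summable fun m : ℕ => F (n, m) := hF.prod_factor n
      rw [Summable.tsum_eq_zero_add hrowsum]
      have h0 : F (n, 0) = 0 := by simp [hFdef]
      have hshift : ∀ m : ℕ, F (n, m + 1) = (moebius n : ℝ) * (r ^ (m + 1)) := by
        intro m
        simp only [hFdef, Nat.succ_ne_zero, if_neg (Nat.succ_ne_zero m), hrdef, ← pow_mul]
      rw [h0, zero_add]
      calc ∑' m : ℕ, F (n, m + 1) = ∑' m : ℕ, (moebius n : ℝ) * (r * r ^ m) := by
            refine tsum_congr fun m => ?_
            rw [hshift m, pow_succ']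
        _ = (moebius n : ℝ) * r * ∑' m : ℕ, r ^ m := by
            rw [← tsum_mul_left]
            refine tsum_congr fun m => by ring
        _ = (moebius n : ℝ) * r * (1 - r)⁻¹ := by
            rw [tsum_geometric_of_lt_one hr0.le hr1]
        _ = (moebius n : ℝ) / (Real.exp (x * n) - 1) := by
            rw [div_eq_mul_inv, hinv n hn', hrdef]
            ring
  -- fibers: tsum over pairs equals tsum over ℕ of fiber sums
  have hfib := (hF.hasSum.tsum_fiberwise (fun p : ℕ × ℕ => p.1 * p.2)).tsum_eq
  have hfibval : ∀ k : ℕ,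
      (∑' p : (fun p : ℕ × ℕ => p.1 * p.2) ⁻¹' {k}, F p) = if k = 1 then q else 0 := by
    intro k
    rcases eq_or_ne k 0 with rfl | hk
    · rw [if_neg one_ne_zero.symm]
      have : ∀ p : (fun p : ℕ × ℕ => p.1 * p.2) ⁻¹' {0}, F p = 0 := by
        rintro ⟨⟨a, b⟩, hp⟩
        simp only [Set.mem_preimage, Set.mem_singleton_iff, Nat.mul_eq_zero] at hp
        rcases eq_or_ne b 0 with rfl | hb
        · simp [hFdef]
        · rcases hp with rfl | rfl
          · simp [hFdef, hb]
          · exact absurd rfl hb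
      simp [this]
    · rw [show (fun p : ℕ × ℕ => p.1 * p.2) ⁻¹' {k} = k.divisorsAntidiagonal by
        ext p; simp [Nat.mem_divisorsAntidiagonal, hk]]
      rw [Finset.tsum_subtype' k.divisorsAntidiagonal F]
      have : ∀ p ∈ k.divisorsAntidiagonal, F p = (moebius p.1 : ℝ) * q ^ k := by
        intro p hp
        have h2 := Nat.mem_divisorsAntidiagonal.mp hp
        have hp2 : p.2 ≠ 0 := by
          intro h0
          exact h2.2 (by rw [← h2.1, h0, mul_zero])
        simp only [hFdef, if_neg hp2, h2.1]
      rw [Finset.sum_congr rfl this, ← Finset.sum_mul, sum_moebius_antidiag k]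
      rcases eq_or_ne k 1 with rfl | hk1
      · simp
      · simp [hk1]
  -- put everything together
  have hPnat : ∑' n : ℕ+, (moebius (n : ℕ) : ℝ) / (Real.exp (x * n) - 1) =
      ∑' n : ℕ, (if n = 0 then 0 else (moebius n : ℝ) / (Real.exp (x * n) - 1)) := by
    have hsupp : (Function.support fun a : ℕ =>
        if a = 0 then 0 else (moebius a : ℝ) / (Real.exp (x * a) - 1)) ⊆
        Set.range ((↑) : ℕ+ → ℕ) := by
      intro a ha
      rcases eq_or_ne a 0 with rfl | h0
      · simp [Function.mem_support] at ha
      · exact ⟨⟨a, Nat.pos_of_ne_zero h0⟩, rfl⟩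
    rw [← PNat.coe_injective.tsum_eq hsupp]
    exact tsum_congr fun n => (if_neg n.2.ne').symm
  rw [hPnat, ← tsum_congr hrow, ← Summable.tsum_prod' hF (fun b => hF.prod_factor b), ← hfib, tsum_congr hfibval, tsum_ite_eq]

theorem lambert_moebius_exp_plus (x : ℝ) (hx : 0 < x) :
    Summable (fun n : ℕ+ => |(moebius (n : ℕ) : ℝ) / (Real.exp (x * n) + 1)|) ∧
    ∑' n : ℕ+, (moebius (n : ℕ) : ℝ) / (Real.exp (x * n) + 1) =
      Real.exp (-x) - 2 * Real.exp (-2 * x) := by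
  obtain ⟨hs1, ht1⟩ := lambert_key x hx
  obtain ⟨hs2, ht2⟩ := lambert_key (2 * x) (by positivity)
  have hE1 : ∀ n : ℕ+, (1 : ℝ) < Real.exp (x * n) := by
    intro n
    rw [Real.one_lt_exp_iff]
    have := n.2
    positivity
  have hpoint : ∀ n : ℕ+, (moebius (n : ℕ) : ℝ) / (Real.exp (x * n) + 1) =
      (moebius (n : ℕ) : ℝ) / (Real.exp (x * n) - 1)
        - 2 * ((moebius (n : ℕ) : ℝ) / (Real.exp (2 * x * n) - 1)) := by
    intro n
    have hsq : Real.exp (2 * x * n) = Real.exp (x * n) * Real.exp (x * n) := by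
      rw [← Real.exp_add]; ring_nf
    have h1 := hE1 n
    have ha : Real.exp (x * n) + 1 ≠ 0 := by linarith
    have hb : Real.exp (x * n) - 1 ≠ 0 := by linarith
    have hc : Real.exp (2 * x * n) - 1 ≠ 0 := by
      rw [hsq]; nlinarith
    have hc2 : Real.exp (x * n) * Real.exp (x * n) - 1 ≠ 0 := by nlinarith
    have hc3 : Real.exp (x * n) ^ 2 - 1 ≠ 0 := by nlinarith
    rw [hsq]
    field_simp
    ring
  constructor
  · refine Summable.of_nonneg_of_le (fun n => abs_nonneg _) (fun n => ?_) hs1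
    have h1 := hE1 n
    rw [abs_div, abs_div, abs_of_pos (by linarith : (0:ℝ) < Real.exp (x * n) + 1),
      abs_of_pos (by linarith : (0:ℝ) < Real.exp (x * n) - 1)]
    gcongr
    · linarith
  · rw [tsum_congr hpoint,
      Summable.tsum_sub hs1.of_abs ((hs2.of_abs).mul_left 2), tsum_mul_left, ht1, ht2]
    ring_nf
end
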